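/- arXiv:2012.10406 — 2 statements merged into one kernel-verified Lean document; each statement's English description precedes it below -/
import Mathlib

section
/- Let (b, B, m, μ) be an admissible parameter set and assume K is regular. For u ∈ K let ψ(·,u) be the unique K-valued C¹-solution of ∂ψ/∂t = R(ψ), ψ(0,u) = u. Then: (a) for all u, v ∈ K with u ≤_K v and all t ≥ 0, ψ(t,u) ≤_K ψ(t,v); and (b) for all t ≥ 0 and u ∈ K, ‖ψ(t,u)‖ ≤ exp((‖B‖_{L(H)} + 2‖μ(K∖{0})‖) t) ‖u‖. -/
open MeasureTheory Filter
open scoped RealInnerProductSpace Topology ENNReal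

noncomputable section

def IsSelfDualCone {H : Type*} [NormedAddCommGroup H] [InnerProductSpace ℝ H]
    (K : Set H) : Prop :=
  K = {x : H | ∀ y ∈ K, 0 ≤ ⟪x, y⟫}

def trunc {H : Type*} [NormedAddCommGroup H] [InnerProductSpace ℝ H] (ξ : H) : H :=
  if ‖ξ‖ ≤ 1 then ξ else 0

structure AdmissibleParams (H : Type*) [NormedAddCommGroup H] [InnerProductSpace ℝ H]
    [CompleteSpace H] [MeasurableSpace H] [BorelSpace H] (K : Set H) where
  b : H
  B : H →L[ℝ] H
  m : Measure H
  ν : H → Measure H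
  muVec : Set H → H
  m_support : m ((K \ {0})ᶜ) = 0
  m_sq : IntegrableOn (fun ξ : H => ‖ξ‖ ^ 2) (K \ {0}) m
  m_chi : ∀ h : H, IntegrableOn (fun ξ : H => |⟪trunc ξ, h⟫|) (K \ {0}) m
  m_Im : ∃ Im : H, ∀ h : H, ⟪Im, h⟫ = ∫ ξ in K \ {0}, ⟪trunc ξ, h⟫ ∂m
  b_drift : ∀ v ∈ K, 0 ≤ ⟪b, v⟫ - ∫ ξ in K \ {0}, ⟪trunc ξ, v⟫ ∂m
  ν_finite : ∀ x ∈ K, IsFiniteMeasure (ν x)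
  ν_support : ∀ x ∈ K, ν x ((K \ {0})ᶜ) = 0
  ν_add : ∀ x ∈ K, ∀ y ∈ K, ν (x + y) = ν x + ν y
  ν_smul : ∀ x ∈ K, ∀ c : ℝ, 0 ≤ c → ν (c • x) = ENNReal.ofReal c • ν x
  ν_int : ∀ u ∈ K, ∀ x ∈ K, ⟪u, x⟫ = 0 →
    IntegrableOn (fun ξ : H => ⟪trunc ξ, u⟫ / ‖ξ‖ ^ 2) (K \ {0}) (ν x)
  B_quasi : ∀ u ∈ K, ∀ x ∈ K, ⟪u, x⟫ = 0 →
    0 ≤ ⟪ContinuousLinearMap.adjoint B u, x⟫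
      - ∫ ξ in K \ {0}, ⟪trunc ξ, u⟫ / ‖ξ‖ ^ 2 ∂(ν x)
  muVec_mem : ∀ S : Set H, MeasurableSet S → muVec S ∈ K
  muVec_spec : ∀ S : Set H, MeasurableSet S → ∀ x ∈ K, ⟪muVec S, x⟫ = (ν x S).toReal

section SD

variable {H : Type*} [NormedAddCommGroup H] [InnerProductSpace ℝ H] {K : Set H}

lemma SD.mem_iff (hK : IsSelfDualCone K) {x : H} : x ∈ K ↔ ∀ y ∈ K, 0 ≤ ⟪x, y⟫ := by
  conv_lhs => rw [hK]
  exact Iff.rfl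

lemma SD.inner_nonneg (hK : IsSelfDualCone K) {x y : H} (hx : x ∈ K) (hy : y ∈ K) :
    0 ≤ ⟪x, y⟫ := (SD.mem_iff hK).1 hx y hy

lemma SD.zero_mem (hK : IsSelfDualCone K) : (0 : H) ∈ K :=
  (SD.mem_iff hK).2 fun y _ => by simp

lemma SD.add_mem (hK : IsSelfDualCone K) {x y : H} (hx : x ∈ K) (hy : y ∈ K) : x + y ∈ K :=
  (SD.mem_iff hK).2 fun z hz => by
    rw [inner_add_left]
    exact add_nonneg (SD.inner_nonneg hK hx hz) (SD.inner_nonneg hK hy hz)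

lemma SD.smul_mem (hK : IsSelfDualCone K) {c : ℝ} (hc : 0 ≤ c) {x : H} (hx : x ∈ K) :
    c • x ∈ K :=
  (SD.mem_iff hK).2 fun z hz => by
    rw [real_inner_smul_left]
    exact mul_nonneg hc (SD.inner_nonneg hK hx hz)

lemma SD.isClosed (hK : IsSelfDualCone K) : IsClosed K := by
  have h : K = ⋂ y ∈ K, {x : H | 0 ≤ ⟪x, y⟫} := by
    conv_lhs => rw [hK]
    ext x; simp [Set.mem_iInter]
  rw [h]
  exact isClosed_biInter fun y _ =>
    isClosed_le continuous_const (continuous_id.inner continuous_const)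

lemma SD.convex (hK : IsSelfDualCone K) : Convex ℝ K := by
  intro x hx y hy a b ha hb hab
  refine (SD.mem_iff hK).2 fun z hz => ?_
  rw [inner_add_left, real_inner_smul_left, real_inner_smul_left]
  exact add_nonneg (mul_nonneg ha (SD.inner_nonneg hK hx hz))
    (mul_nonneg hb (SD.inner_nonneg hK hy hz))

lemma SD.proj (hK : IsSelfDualCone K) [CompleteSpace H] (w : H) :
    ∃ z, z ∈ K ∧ z - w ∈ K ∧ ⟪z, z - w⟫ = 0 ∧ Metric.infDist w K = ‖w - z‖ := by
  obtain ⟨z, hzK, hmin⟩ := exists_norm_eq_iInf_of_complete_convex ⟨0, SD.zero_mem hK⟩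
    ((SD.isClosed hK).isComplete) (SD.convex hK) w
  have hvar := (norm_eq_iInf_iff_real_inner_le_zero (SD.convex hK) hzK).1 hmin
  have h1 : ⟪w - z, z⟫ ≤ 0 := by
    have h2 : (2:ℝ) • z - z = z := by
      rw [two_smul]; abel
    have := hvar ((2:ℝ) • z) (SD.smul_mem hK (by norm_num) hzK)
    rwa [h2] at this
  have h2 : 0 ≤ ⟪w - z, z⟫ := by
    have := hvar 0 (SD.zero_mem hK)
    rw [zero_sub, inner_neg_right] at this
    linarith
  have horth : ⟪z, z - w⟫ = 0 := by
    have h3 : ⟪w - z, z⟫ = 0 := le_antisymm h1 h2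
    have h4 : ⟪z, z - w⟫ = -⟪w - z, z⟫ := by
      rw [real_inner_comm, show z - w = -(w - z) by abel, inner_neg_left]
    rw [h4, h3, neg_zero]
  have hmemK : z - w ∈ K := by
    refine (SD.mem_iff hK).2 fun y hy => ?_
    have h5 := hvar (z + y) (SD.add_mem hK hzK hy)
    rw [show z + y - z = y by abel] at h5
    rw [show z - w = -(w - z) by abel, inner_neg_left]
    linarith
  refine ⟨z, hzK, hmemK, horth, ?_⟩
  rw [hmin, Metric.infDist_eq_iInf]
  exact iInf_congr fun y => dist_eq_norm w y

end SD

section ExpLemmas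

lemma exp_lower {s : ℝ} : 0 ≤ Real.exp (-s) - 1 + s := by
  have := Real.add_one_le_exp (-s)
  linarith

lemma exp_quad {s : ℝ} (hs : 0 ≤ s) : Real.exp (-s) - 1 + s ≤ s ^ 2 := by
  rcases le_or_gt s 1 with h | h
  · have h1 := Real.abs_exp_sub_one_sub_id_le (x := -s) (by rwa [abs_neg, abs_of_nonneg hs])
    rw [abs_le] at h1
    have h2 := h1.2
    nlinarith [h2]
  · have h1 : Real.exp (-s) ≤ 1 := Real.exp_le_one_iff.2 (by linarith)
    nlinarith

lemma exp_lip {p t : ℝ} (hp : 0 ≤ p) (ht : 0 ≤ t) :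
    Real.exp (-p) - Real.exp (-(p + t)) ≤ t := by
  have h1 : Real.exp (-p) ≤ 1 := Real.exp_le_one_iff.2 (by linarith)
  have h2 : -t + 1 ≤ Real.exp (-t) := Real.add_one_le_exp (-t)
  have h3 : Real.exp (-(p + t)) = Real.exp (-p) * Real.exp (-t) := by
    rw [neg_add, Real.exp_add]
  have h4 : Real.exp (-t) ≤ 1 := Real.exp_le_one_iff.2 (by linarith)
  nlinarith [mul_nonneg (by linarith : (0:ℝ) ≤ 1 - Real.exp (-p))
    (by linarith : (0:ℝ) ≤ 1 - Real.exp (-t))]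

end ExpLemmas

section Estimates

variable {H : Type*} [NormedAddCommGroup H] [InnerProductSpace ℝ H] [CompleteSpace H]
  [MeasurableSpace H] [BorelSpace H] {K : Set H}

lemma measurableSet_Kd (hK : IsSelfDualCone K) : MeasurableSet (K \ {0} : Set H) :=
  ((SD.isClosed hK).measurableSet).diff (measurableSet_singleton 0)

lemma meas_inner_trunc (u : H) : Measurable fun ξ : H => ⟪trunc ξ, u⟫ := by
  have h : (fun ξ : H => ⟪trunc ξ, u⟫) = fun ξ : H => if ‖ξ‖ ≤ 1 then ⟪ξ, u⟫ else 0 := by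
    funext ξ
    simp only [trunc]
    split <;> simp
  rw [h]
  exact Measurable.ite (measurableSet_le measurable_norm measurable_const)
    (Continuous.measurable (continuous_id.inner continuous_const)) measurable_const

lemma meas_integrand (u : H) :
    Measurable fun ξ : H => (Real.exp (-⟪ξ, u⟫) - 1 + ⟪trunc ξ, u⟫) / ‖ξ‖ ^ 2 := by
  have h1 : Measurable fun ξ : H => Real.exp (-⟪ξ, u⟫) :=
    (Real.continuous_exp.comp (continuous_id.inner continuous_const).neg).measurable
  exact ((h1.sub measurable_const).add (meas_inner_trunc u)).div
    (measurable_norm.pow_const 2)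

lemma integrand_bound (hK : IsSelfDualCone K) {u : H} (hu : u ∈ K) {ξ : H}
    (hξ : ξ ∈ K \ {0}) :
    |(Real.exp (-⟪ξ, u⟫) - 1 + ⟪trunc ξ, u⟫) / ‖ξ‖ ^ 2| ≤ 1 + ‖u‖ ^ 2 := by
  have hξ0 : ξ ≠ 0 := hξ.2
  have hn : 0 < ‖ξ‖ := norm_pos_iff.2 hξ0
  have hn2 : 0 < ‖ξ‖ ^ 2 := by positivity
  have hs : 0 ≤ ⟪ξ, u⟫ := SD.inner_nonneg hK hξ.1 hu
  rw [abs_div, abs_of_pos hn2, div_le_iff₀ hn2]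
  rcases le_or_gt ‖ξ‖ 1 with h | h
  · rw [show trunc ξ = ξ from if_pos h]
    have hub := exp_quad hs
    have hlb := exp_lower (s := ⟪ξ, u⟫)
    rw [abs_of_nonneg hlb]
    have hcs : ⟪ξ, u⟫ ≤ ‖ξ‖ * ‖u‖ := real_inner_le_norm ξ u
    nlinarith [norm_nonneg ξ, norm_nonneg u, sq_nonneg ‖u‖]
  · rw [show trunc ξ = 0 from if_neg (not_le.2 h), inner_zero_left, add_zero]
    have h1 : Real.exp (-⟪ξ, u⟫) ≤ 1 := Real.exp_le_one_iff.2 (by linarith)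
    have h2 : 0 < Real.exp (-⟪ξ, u⟫) := Real.exp_pos _
    have h3 : |Real.exp (-⟪ξ, u⟫) - 1| ≤ 1 := by rw [abs_le]; constructor <;> linarith
    have h4 : 1 ≤ ‖ξ‖ ^ 2 := by nlinarith
    nlinarith [sq_nonneg ‖u‖]

lemma integrand_integrable (hK : IsSelfDualCone K) (p : AdmissibleParams H K)
    {u x : H} (hu : u ∈ K) (hx : x ∈ K) :
    IntegrableOn (fun ξ : H => (Real.exp (-⟪ξ, u⟫) - 1 + ⟪trunc ξ, u⟫) / ‖ξ‖ ^ 2)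
      (K \ {0}) (p.ν x) := by
  haveI := p.ν_finite x hx
  refine Integrable.mono' (integrable_const (1 + ‖u‖ ^ 2))
    (meas_integrand u).aestronglyMeasurable ?_
  refine (ae_restrict_iff' (measurableSet_Kd hK)).2 (ae_of_all _ fun ξ hξ => ?_)
  rw [Real.norm_eq_abs]
  exact integrand_bound hK hu hξ

lemma nu_toReal (hK : IsSelfDualCone K) (p : AdmissibleParams H K) {x : H} (hx : x ∈ K) :
    (p.ν x (K \ {0})).toReal ≤ ‖p.muVec (K \ {0})‖ * ‖x‖ := by
  rw [← p.muVec_spec _ (measurableSet_Kd hK) x hx]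
  exact real_inner_le_norm _ _

lemma R_sub_inner (hK : IsSelfDualCone K) (p : AdmissibleParams H K) {R : H → H}
    (hR : ∀ u ∈ K, ∀ x ∈ K, ⟪R u, x⟫ =
      ⟪ContinuousLinearMap.adjoint p.B u, x⟫
        - ∫ ξ in K \ {0}, (Real.exp (-⟪ξ, u⟫) - 1 + ⟪trunc ξ, u⟫) / ‖ξ‖ ^ 2 ∂(p.ν x))
    {c d n : H} (hc : c ∈ K) (hd : d ∈ K) (hn : n ∈ K) :
    ⟪R c - R d, n⟫ = ⟪c - d, p.B n⟫
      - ∫ ξ in K \ {0},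
          (Real.exp (-⟪ξ, c⟫) - Real.exp (-⟪ξ, d⟫) + (⟪trunc ξ, c⟫ - ⟪trunc ξ, d⟫)) / ‖ξ‖ ^ 2
        ∂(p.ν n) := by
  have hic := integrand_integrable hK p hc hn
  have hid := integrand_integrable hK p hd hn
  have hI : (∫ ξ in K \ {0},
        (Real.exp (-⟪ξ, c⟫) - Real.exp (-⟪ξ, d⟫) + (⟪trunc ξ, c⟫ - ⟪trunc ξ, d⟫)) / ‖ξ‖ ^ 2
        ∂(p.ν n))
      = (∫ ξ in K \ {0}, (Real.exp (-⟪ξ, c⟫) - 1 + ⟪trunc ξ, c⟫) / ‖ξ‖ ^ 2 ∂(p.ν n))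
        - ∫ ξ in K \ {0}, (Real.exp (-⟪ξ, d⟫) - 1 + ⟪trunc ξ, d⟫) / ‖ξ‖ ^ 2 ∂(p.ν n) := by
    rw [← integral_sub hic hid]
    refine integral_congr_ae (ae_of_all _ fun ξ => ?_)
    ring
  rw [inner_sub_left, hR c hc n hn, hR d hd n hn, hI,
    ContinuousLinearMap.adjoint_inner_left, ContinuousLinearMap.adjoint_inner_left,
    inner_sub_left]
  ring

lemma R_quasi (hK : IsSelfDualCone K) (p : AdmissibleParams H K) {R : H → H}
    (hR : ∀ u ∈ K, ∀ x ∈ K, ⟪R u, x⟫ =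
      ⟪ContinuousLinearMap.adjoint p.B u, x⟫
        - ∫ ξ in K \ {0}, (Real.exp (-⟪ξ, u⟫) - 1 + ⟪trunc ξ, u⟫) / ‖ξ‖ ^ 2 ∂(p.ν x))
    {c d n : H} (hc : c ∈ K) (hd : d ∈ K) (hn : n ∈ K) (hcd : c - d ∈ K)
    (horth : ⟪c - d, n⟫ = 0) :
    0 ≤ ⟪R c - R d, n⟫ := by
  rw [R_sub_inner hK p hR hc hd hn]
  have hs := measurableSet_Kd hK (K := K)
  have hgi : IntegrableOn
      (fun ξ : H =>
        (Real.exp (-⟪ξ, c⟫) - Real.exp (-⟪ξ, d⟫) + (⟪trunc ξ, c⟫ - ⟪trunc ξ, d⟫)) / ‖ξ‖ ^ 2)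
      (K \ {0}) (p.ν n) := by
    have base : IntegrableOn (fun ξ : H => (Real.exp (-⟪ξ, c⟫) - 1 + ⟪trunc ξ, c⟫) / ‖ξ‖ ^ 2
        - (Real.exp (-⟪ξ, d⟫) - 1 + ⟪trunc ξ, d⟫) / ‖ξ‖ ^ 2) (K \ {0}) (p.ν n) :=
      (integrand_integrable hK p hc hn).sub (integrand_integrable hK p hd hn)
    refine base.congr_fun (fun ξ _ => ?_) hs
    ring
  have hti : IntegrableOn (fun ξ : H => ⟪trunc ξ, c - d⟫ / ‖ξ‖ ^ 2) (K \ {0}) (p.ν n) :=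
    p.ν_int (c - d) hcd n hn horth
  have hmono : (∫ ξ in K \ {0},
        (Real.exp (-⟪ξ, c⟫) - Real.exp (-⟪ξ, d⟫) + (⟪trunc ξ, c⟫ - ⟪trunc ξ, d⟫)) / ‖ξ‖ ^ 2
        ∂(p.ν n))
      ≤ ∫ ξ in K \ {0}, ⟪trunc ξ, c - d⟫ / ‖ξ‖ ^ 2 ∂(p.ν n) := by
    refine setIntegral_mono_on hgi hti hs fun ξ hξ => ?_
    have hE : Real.exp (-⟪ξ, c⟫) ≤ Real.exp (-⟪ξ, d⟫) := by
      apply Real.exp_le_exp.2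
      have h0 : 0 ≤ ⟪c - d, ξ⟫ := SD.inner_nonneg hK hcd hξ.1
      rw [inner_sub_left] at h0
      have e1 : ⟪ξ, c⟫ = ⟪c, ξ⟫ := real_inner_comm _ _
      have e2 : ⟪ξ, d⟫ = ⟪d, ξ⟫ := real_inner_comm _ _
      linarith
    rw [inner_sub_right]
    have hn2 : 0 < ‖ξ‖ ^ 2 := pow_pos (norm_pos_iff.2 hξ.2) 2
    exact div_le_div_of_nonneg_right (by linarith) hn2.le
  have hB := p.B_quasi (c - d) hcd n hn horth
  rw [ContinuousLinearMap.adjoint_inner_left] at hB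
  linarith

lemma R_onesided (hK : IsSelfDualCone K) (p : AdmissibleParams H K) {R : H → H}
    (hR : ∀ u ∈ K, ∀ x ∈ K, ⟪R u, x⟫ =
      ⟪ContinuousLinearMap.adjoint p.B u, x⟫
        - ∫ ξ in K \ {0}, (Real.exp (-⟪ξ, u⟫) - 1 + ⟪trunc ξ, u⟫) / ‖ξ‖ ^ 2 ∂(p.ν x))
    {a n : H} (ha : a ∈ K) (hn : n ∈ K) (han : a - n ∈ K) :
    -((‖p.B‖ + ‖p.muVec (K \ {0})‖) * ‖n‖ ^ 2) ≤ ⟪R (a - n) - R a, n⟫ := by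
  haveI := p.ν_finite n hn
  have hs := measurableSet_Kd hK (K := K)
  rw [R_sub_inner hK p hR han ha hn]
  have hBpart : -(‖p.B‖ * ‖n‖ ^ 2) ≤ ⟪a - n - a, p.B n⟫ := by
    rw [show a - n - a = -n by abel, inner_neg_left]
    have h2 : ⟪n, p.B n⟫ ≤ ‖n‖ * ‖p.B n‖ := real_inner_le_norm _ _
    have h3 : ‖p.B n‖ ≤ ‖p.B‖ * ‖n‖ := p.B.le_opNorm n
    nlinarith [norm_nonneg n]
  have hgi : IntegrableOn
      (fun ξ : H =>
        (Real.exp (-⟪ξ, a - n⟫) - Real.exp (-⟪ξ, a⟫) + (⟪trunc ξ, a - n⟫ - ⟪trunc ξ, a⟫))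
          / ‖ξ‖ ^ 2)
      (K \ {0}) (p.ν n) := by
    have base : IntegrableOn (fun ξ : H => (Real.exp (-⟪ξ, a - n⟫) - 1 + ⟪trunc ξ, a - n⟫) / ‖ξ‖ ^ 2
        - (Real.exp (-⟪ξ, a⟫) - 1 + ⟪trunc ξ, a⟫) / ‖ξ‖ ^ 2) (K \ {0}) (p.ν n) :=
      (integrand_integrable hK p han hn).sub (integrand_integrable hK p ha hn)
    refine base.congr_fun (fun ξ _ => ?_) hs
    ring
  have hpt : ∀ ξ ∈ K \ {0},
      (Real.exp (-⟪ξ, a - n⟫) - Real.exp (-⟪ξ, a⟫) + (⟪trunc ξ, a - n⟫ - ⟪trunc ξ, a⟫))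
          / ‖ξ‖ ^ 2 ≤ ‖n‖ := by
    intro ξ hξ
    have hξ0 : ξ ≠ 0 := hξ.2
    have hnrm : 0 < ‖ξ‖ := norm_pos_iff.2 hξ0
    have hn2 : 0 < ‖ξ‖ ^ 2 := by positivity
    have hpp : 0 ≤ ⟪ξ, a - n⟫ := by
      rw [real_inner_comm]; exact SD.inner_nonneg hK han hξ.1
    have htt : 0 ≤ ⟪ξ, n⟫ := by
      rw [real_inner_comm]; exact SD.inner_nonneg hK hn hξ.1
    have hq : ⟪ξ, a⟫ = ⟪ξ, a - n⟫ + ⟪ξ, n⟫ := by rw [inner_sub_right]; ring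
    have hE : Real.exp (-⟪ξ, a - n⟫) - Real.exp (-⟪ξ, a⟫) ≤ ⟪ξ, n⟫ := by
      have := exp_lip hpp htt
      rw [← hq] at this
      exact this
    rw [div_le_iff₀ hn2]
    rcases le_or_gt ‖ξ‖ 1 with h | h
    · rw [show trunc ξ = ξ from if_pos h]
      nlinarith [mul_nonneg (norm_nonneg n) hn2.le, hq, hE]
    · rw [show trunc ξ = 0 from if_neg (not_le.2 h), inner_zero_left, inner_zero_left]
      have hcs : ⟪ξ, n⟫ ≤ ‖ξ‖ * ‖n‖ := real_inner_le_norm ξ n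
      nlinarith [norm_nonneg n, mul_nonneg (norm_nonneg n)
        (by nlinarith : (0:ℝ) ≤ ‖ξ‖ ^ 2 - ‖ξ‖)]
  have hub : (∫ ξ in K \ {0},
        (Real.exp (-⟪ξ, a - n⟫) - Real.exp (-⟪ξ, a⟫) + (⟪trunc ξ, a - n⟫ - ⟪trunc ξ, a⟫))
          / ‖ξ‖ ^ 2 ∂(p.ν n))
      ≤ ‖p.muVec (K \ {0})‖ * ‖n‖ ^ 2 := by
    have h1 := setIntegral_mono_on hgi (integrable_const ‖n‖) hs hpt
    rw [setIntegral_const, smul_eq_mul] at h1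
    have h2 := nu_toReal hK p hn
    nlinarith [norm_nonneg n, ENNReal.toReal_nonneg (a := p.ν n (K \ {0})),
      (show (p.ν n).real (K \ {0}) = (p.ν n (K \ {0})).toReal from rfl)]
  linarith

lemma R_self (hK : IsSelfDualCone K) (p : AdmissibleParams H K) {R : H → H}
    (hR : ∀ u ∈ K, ∀ x ∈ K, ⟪R u, x⟫ =
      ⟪ContinuousLinearMap.adjoint p.B u, x⟫
        - ∫ ξ in K \ {0}, (Real.exp (-⟪ξ, u⟫) - 1 + ⟪trunc ξ, u⟫) / ‖ξ‖ ^ 2 ∂(p.ν x))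
    {u : H} (hu : u ∈ K) :
    ⟪R u, u⟫ ≤ (‖p.B‖ + ‖p.muVec (K \ {0})‖) * ‖u‖ ^ 2 := by
  haveI := p.ν_finite u hu
  have hs := measurableSet_Kd hK (K := K)
  rw [hR u hu u hu, ContinuousLinearMap.adjoint_inner_left]
  have h1 : ⟪u, p.B u⟫ ≤ ‖p.B‖ * ‖u‖ ^ 2 := by
    have h2 : ⟪u, p.B u⟫ ≤ ‖u‖ * ‖p.B u‖ := real_inner_le_norm _ _
    have h3 : ‖p.B u‖ ≤ ‖p.B‖ * ‖u‖ := p.B.le_opNorm u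
    nlinarith [norm_nonneg u]
  have hpt : ∀ ξ ∈ K \ {0},
      -‖u‖ ≤ (Real.exp (-⟪ξ, u⟫) - 1 + ⟪trunc ξ, u⟫) / ‖ξ‖ ^ 2 := by
    intro ξ hξ
    have hξ0 : ξ ≠ 0 := hξ.2
    have hnrm : 0 < ‖ξ‖ := norm_pos_iff.2 hξ0
    have hn2 : 0 < ‖ξ‖ ^ 2 := by positivity
    have hss : 0 ≤ ⟪ξ, u⟫ := SD.inner_nonneg hK hξ.1 hu
    rw [le_div_iff₀ hn2]
    rcases le_or_gt ‖ξ‖ 1 with h | h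
    · rw [show trunc ξ = ξ from if_pos h]
      have := exp_lower (s := ⟪ξ, u⟫)
      nlinarith [mul_nonneg (norm_nonneg u) hn2.le]
    · rw [show trunc ξ = 0 from if_neg (not_le.2 h), inner_zero_left, add_zero]
      have hlb : -⟪ξ, u⟫ ≤ Real.exp (-⟪ξ, u⟫) - 1 := by
        have := Real.add_one_le_exp (-⟪ξ, u⟫); linarith
      have hcs : ⟪ξ, u⟫ ≤ ‖ξ‖ * ‖u‖ := real_inner_le_norm ξ u
      nlinarith [norm_nonneg u]
  have hlow : -(‖p.muVec (K \ {0})‖ * ‖u‖ ^ 2)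
      ≤ ∫ ξ in K \ {0}, (Real.exp (-⟪ξ, u⟫) - 1 + ⟪trunc ξ, u⟫) / ‖ξ‖ ^ 2 ∂(p.ν u) := by
    have h1' := setIntegral_mono_on (integrable_const (-‖u‖))
      (integrand_integrable hK p hu hu) hs hpt
    rw [setIntegral_const, smul_eq_mul] at h1'
    have h2 := nu_toReal hK p hu
    nlinarith [norm_nonneg u, ENNReal.toReal_nonneg (a := p.ν u (K \ {0})),
      (show (p.ν u).real (K \ {0}) = (p.ν u (K \ {0})).toReal from rfl)]
  linarith

end Estimates

section Gronwall

lemma gron {f f' : ℝ → ℝ} {C T : ℝ} (hT : 0 ≤ T)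
    (hc : ContinuousOn f (Set.Icc 0 T))
    (hsl : ∀ s ∈ Set.Ico 0 T, ∀ r, f' s < r →
      ∃ᶠ z in 𝓝[>] s, (z - s)⁻¹ * (f z - f s) < r)
    (hb : ∀ s ∈ Set.Ico 0 T, f' s ≤ C * f s) :
    f T ≤ f 0 * Real.exp (C * T) := by
  have h := le_gronwallBound_of_liminf_deriv_right_le (δ := f 0) (ε := 0) hc hsl le_rfl
    (fun s hs' => by simpa using hb s hs') T (Set.right_mem_Icc.2 hT)
  simpa [gronwallBound_ε0] using h

lemma slope_freq {g φ : ℝ → ℝ} {D : ℝ} {s : ℝ}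
    (hg : HasDerivWithinAt g D (Set.Ioi s) s)
    (hle : ∀ z, φ z ≤ g z) (heq : φ s = g s) {r : ℝ} (hr : D < r) :
    ∃ᶠ z in 𝓝[>] s, (z - s)⁻¹ * (φ z - φ s) < r := by
  have h := hasDerivWithinAt_iff_tendsto_slope.1 hg
  rw [Set.diff_singleton_eq_self (by simp : s ∉ Set.Ioi s)] at h
  have hev : ∀ᶠ z in 𝓝[>] s, slope g s z < r := h.eventually_lt_const hr
  refine ((hev.and self_mem_nhdsWithin).frequently).mono ?_
  rintro z ⟨hz1, hz2⟩
  have hzs : s < z := hz2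
  have hinv : (0:ℝ) ≤ (z - s)⁻¹ := inv_nonneg.2 (by linarith)
  have h1 : (z - s)⁻¹ * (φ z - φ s) ≤ (z - s)⁻¹ * (g z - g s) := by
    apply mul_le_mul_of_nonneg_left _ hinv
    have := hle z
    linarith
  have h2 : slope g s z = (z - s)⁻¹ * (g z - g s) := by
    rw [slope_def_field, div_eq_inv_mul]
  linarith [hz1, h2 ▸ hz1]

end Gronwall

def IsRegularCone {H : Type*} [NormedAddCommGroup H] [InnerProductSpace ℝ H]
    (K : Set H) : Prop :=
  ∀ (y : H) (x : ℕ → H), y ∈ K → (∀ n, x n ∈ K) →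
    (∀ n, x (n + 1) - x n ∈ K) → (∀ n, y - x n ∈ K) →
    ∃ l : H, Filter.Tendsto x Filter.atTop (nhds l)

/-- Monotonicity of `ψ(t,·)` with respect to the cone order and the
exponential growth bound `‖ψ(t,u)‖ ≤ e^{(‖B‖ + 2‖μ(K∖{0})‖)t}‖u‖`. -/
theorem stmt_9 {H : Type*} [NormedAddCommGroup H] [InnerProductSpace ℝ H] [CompleteSpace H]
    [MeasurableSpace H] [BorelSpace H] (K : Set H)
    (hK : IsSelfDualCone K) (hKgen : ∀ z : H, ∃ x ∈ K, ∃ y ∈ K, z = x - y)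
    (hreg : IsRegularCone K)
    (p : AdmissibleParams H K)
    (R : H → H)
    (hR : ∀ u ∈ K, ∀ x ∈ K, ⟪R u, x⟫ =
      ⟪ContinuousLinearMap.adjoint p.B u, x⟫
        - ∫ ξ in K \ {0}, (Real.exp (-⟪ξ, u⟫) - 1 + ⟪trunc ξ, u⟫) / ‖ξ‖ ^ 2 ∂(p.ν x))
    (ψ : ℝ → H → H)
    (hψ : ∀ u ∈ K, ψ 0 u = u ∧ (∀ t, 0 ≤ t → ψ t u ∈ K) ∧
      (∀ t, 0 ≤ t → HasDerivWithinAt (fun s => ψ s u) (R (ψ t u)) (Set.Ici 0) t))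
    (hψuniq : ∀ u ∈ K, ∀ g : ℝ → H, g 0 = u → (∀ t, 0 ≤ t → g t ∈ K) →
      (∀ t, 0 ≤ t → HasDerivWithinAt g (R (g t)) (Set.Ici 0) t) →
      ∀ t, 0 ≤ t → g t = ψ t u) :
    -- (a) monotonicity
    (∀ u ∈ K, ∀ v ∈ K, v - u ∈ K → ∀ t, 0 ≤ t → ψ t v - ψ t u ∈ K) ∧
    -- (b) exponential growth bound
    (∀ t, 0 ≤ t → ∀ u ∈ K,
      ‖ψ t u‖ ≤ Real.exp ((‖p.B‖ + 2 * ‖p.muVec (K \ {0})‖) * t) * ‖u‖) := by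
  classical
  constructor
  · -- (a) monotonicity
    intro u hu v hv hvu t ht
    obtain ⟨hu0, huK, huD⟩ := hψ u hu
    obtain ⟨hv0, hvK, hvD⟩ := hψ v hv
    set w : ℝ → H := fun s => ψ s v - ψ s u with hw
    choose P hPK hPn hPo hPd using fun s : ℝ => SD.proj hK (w s)
    set φ : ℝ → ℝ := fun s => Metric.infDist (w s) K ^ 2 with hφ
    have hwC : ContinuousOn w (Set.Ici 0) := fun s hs =>
      ((hvD s hs).sub (huD s hs)).continuousWithinAt
    have hφC : ContinuousOn φ (Set.Icc 0 t) :=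
      (((Metric.continuous_infDist_pt K).comp_continuousOn
        (hwC.mono Set.Icc_subset_Ici_self)).pow 2)
    have key : φ t ≤ φ 0 * Real.exp (2 * (‖p.B‖ + ‖p.muVec (K \ {0})‖) * t) := by
      refine gron (f' := fun s => 2 * ⟪R (ψ s v) - R (ψ s u), w s - P s⟫) ht hφC ?_ ?_
      · -- slope condition
        intro s hs r hr
        have hD : HasDerivWithinAt w (R (ψ s v) - R (ψ s u)) (Set.Ici 0) s :=
          (hvD s hs.1).sub (huD s hs.1)
        have hsub : Set.Ioi s ⊆ Set.Ici (0:ℝ) := fun z hz => le_trans hs.1 (le_of_lt hz)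
        have hgD : HasDerivWithinAt (fun z => ⟪w z - P s, w z - P s⟫)
            (2 * ⟪R (ψ s v) - R (ψ s u), w s - P s⟫) (Set.Ioi s) s := by
          have h1 := (HasDerivWithinAt.inner ℝ (hD.sub_const (P s))
            (hD.sub_const (P s))).mono hsub
          refine h1.congr_deriv ?_
          rw [real_inner_comm (w s - P s)]
          ring
        refine slope_freq hgD (fun z => ?_) ?_ hr
        · have h1 : Metric.infDist (w z) K ≤ ‖w z - P s‖ := by
            simpa [dist_eq_norm] using Metric.infDist_le_dist_of_mem (hPK s)
          have h2 : (0:ℝ) ≤ Metric.infDist (w z) K := Metric.infDist_nonneg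
          have h3 : ⟪w z - P s, w z - P s⟫ = ‖w z - P s‖ ^ 2 :=
            real_inner_self_eq_norm_sq _
          simp only [hφ]
          rw [h3]
          nlinarith
        · simp only [hφ]
          rw [hPd s, real_inner_self_eq_norm_sq]
      · -- derivative bound
        intro s hs
        have hnK : P s - w s ∈ K := hPn s
        have haK : ψ s u + P s ∈ K := SD.add_mem hK (huK s hs.1) (hPK s)
        have h3 : (ψ s u + P s) - (P s - w s) = ψ s v := by
          simp only [hw]
          abel
        have han : (ψ s u + P s) - (P s - w s) ∈ K := by rw [h3]; exact hvK s hs.1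
        have h1 := R_onesided hK p hR haK hnK han
        rw [h3] at h1
        have h2 : (0:ℝ) ≤ ⟪R (ψ s u + P s) - R (ψ s u), P s - w s⟫ := by
          refine R_quasi hK p hR haK (huK s hs.1) hnK ?_ ?_
          · rw [show ψ s u + P s - ψ s u = P s by abel]
            exact hPK s
          · rw [show ψ s u + P s - ψ s u = P s by abel]
            exact hPo s
        have h4 : ⟪R (ψ s v) - R (ψ s u), P s - w s⟫
            = ⟪R (ψ s v) - R (ψ s u + P s), P s - w s⟫
              + ⟪R (ψ s u + P s) - R (ψ s u), P s - w s⟫ := by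
          rw [← inner_add_left]
          congr 1
          abel
        have h5 : -((‖p.B‖ + ‖p.muVec (K \ {0})‖) * ‖P s - w s‖ ^ 2)
            ≤ ⟪R (ψ s v) - R (ψ s u), P s - w s⟫ := by
          rw [h4]; linarith
        have h6 : w s - P s = -(P s - w s) := by abel
        have h7 : φ s = ‖P s - w s‖ ^ 2 := by
          simp only [hφ]
          rw [hPd s, norm_sub_rev]
        show 2 * ⟪R (ψ s v) - R (ψ s u), w s - P s⟫
            ≤ 2 * (‖p.B‖ + ‖p.muVec (K \ {0})‖) * φ s
        rw [h6, inner_neg_right, h7]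
        linarith
    have hφ0 : φ 0 = 0 := by
      have hw0 : w 0 = v - u := by simp only [hw]; rw [hu0, hv0]
      simp only [hφ]
      rw [hw0, Metric.infDist_zero_of_mem hvu]
      norm_num
    rw [hφ0, zero_mul] at key
    have hφt : Metric.infDist (w t) K = 0 := by
      have h0 : 0 ≤ Metric.infDist (w t) K := Metric.infDist_nonneg
      have h1 : Metric.infDist (w t) K ^ 2 ≤ 0 := key
      nlinarith
    have := ((SD.isClosed hK).mem_iff_infDist_zero ⟨0, SD.zero_mem hK⟩).2 hφt
    simpa [hw] using this
  · -- (b) growth bound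
    intro t ht u hu
    obtain ⟨hu0, huK, huD⟩ := hψ u hu
    set f : ℝ → ℝ := fun s => ⟪ψ s u, ψ s u⟫ with hf
    have hC : ContinuousOn (fun s => ψ s u) (Set.Ici 0) := fun s hs =>
      (huD s hs).continuousWithinAt
    have hfC : ContinuousOn f (Set.Icc 0 t) :=
      (hC.mono Set.Icc_subset_Ici_self).inner (hC.mono Set.Icc_subset_Ici_self)
    have key : f t ≤ f 0 * Real.exp (2 * (‖p.B‖ + ‖p.muVec (K \ {0})‖) * t) := by
      refine gron (f' := fun s => 2 * ⟪R (ψ s u), ψ s u⟫) ht hfC ?_ ?_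
      · intro s hs r hr
        have hD : HasDerivWithinAt (fun z => ψ z u) (R (ψ s u)) (Set.Ici 0) s := huD s hs.1
        have hsub : Set.Ioi s ⊆ Set.Ici (0:ℝ) := fun z hz => le_trans hs.1 (le_of_lt hz)
        have hfD : HasDerivWithinAt f (2 * ⟪R (ψ s u), ψ s u⟫) (Set.Ioi s) s := by
          have h1 := (HasDerivWithinAt.inner ℝ hD hD).mono hsub
          refine h1.congr_deriv ?_
          rw [real_inner_comm (ψ s u)]
          ring
        exact slope_freq hfD (fun z => le_rfl) rfl hr
      · intro s hs
        have h1 := R_self hK p hR (huK s hs.1)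
        have hfs : f s = ‖ψ s u‖ ^ 2 := real_inner_self_eq_norm_sq _
        show 2 * ⟪R (ψ s u), ψ s u⟫ ≤ 2 * (‖p.B‖ + ‖p.muVec (K \ {0})‖) * f s
        rw [hfs]
        linarith
    have hf0 : f 0 = ‖u‖ ^ 2 := by
      simp only [hf]
      rw [hu0, real_inner_self_eq_norm_sq]
    have hft : f t = ‖ψ t u‖ ^ 2 := real_inner_self_eq_norm_sq _
    rw [hf0, hft] at key
    set L : ℝ := ‖p.B‖ + ‖p.muVec (K \ {0})‖ with hL
    have hb : ‖ψ t u‖ ≤ Real.exp (L * t) * ‖u‖ := by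
      have h1 : (Real.exp (L * t) * ‖u‖) ^ 2 = ‖u‖ ^ 2 * Real.exp (2 * L * t) := by
        rw [mul_pow, sq (Real.exp (L * t)), ← Real.exp_add]
        ring_nf
      nlinarith [norm_nonneg (ψ t u), norm_nonneg u, Real.exp_pos (L * t),
        mul_nonneg (Real.exp_pos (L * t)).le (norm_nonneg u)]
    refine hb.trans ?_
    have hLle : L ≤ ‖p.B‖ + 2 * ‖p.muVec (K \ {0})‖ := by
      simp only [hL]
      nlinarith [norm_nonneg (p.muVec (K \ {0}))]
    have hexp : Real.exp (L * t) ≤ Real.exp ((‖p.B‖ + 2 * ‖p.muVec (K \ {0})‖) * t) :=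
      Real.exp_le_exp.2 (mul_le_mul_of_nonneg_right hLle ht)
    exact mul_le_mul_of_nonneg_right hexp (norm_nonneg u)
end
end

section
/- Let (b, B, m, μ) be an admissible parameter set. For u ∈ K let DR(u) denote the map sending v ∈ H to the unique element DR(u)v ∈ H with ⟨DR(u)v, x⟩ = ⟨B*(v),x⟩ + ∫ (⟨ξ,v⟩ e^{−⟨ξ,u⟩} − ⟨χ(ξ),v⟩) ‖ξ‖^{−2} ν_x(dξ) for all x ∈ K, and let D²R(u)(v,w) denote the unique element of H with ⟨D²R(u)(v,w), x⟩ = −∫ ⟨ξ,v⟩ ⟨ξ,w⟩ e^{−⟨ξ,u⟩} ‖ξ‖^{−2} ν_x(dξ) for all x ∈ K. Then: (a) DR(u) is a bounded linear operator on H which is quasi-monotone with respect to K; (b) for all u₀ ∈ K and v ∈ H, ‖DR(u₀)v‖ ≤ ‖B*‖_{L(H)}‖v‖ + ‖μ(K∖{0})‖ (1 + ‖u₀‖) ‖v‖; (c) for all u₀, u₁ ∈ K and v ∈ H, ‖DR(u₀)v − DR(u₁)v‖ ≤ ‖μ(K∖{0})‖ ‖u₀ − u₁‖ ‖v‖; (d)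 for all u₀ ∈ K and v, w ∈ H, ‖D²R(u₀)(v,w)‖ ≤ ‖μ(K∖{0})‖ ‖v‖ ‖w‖; and (e) for fixed v, w ∈ H the map u ↦ D²R(u)(v,w) is continuous on K. -/
open MeasureTheory Filter
open scoped RealInnerProductSpace Topology ENNReal

noncomputable section

lemma exp_neg_lip {a b : ℝ} (ha : 0 ≤ a) (hb : 0 ≤ b) :
    |Real.exp (-a) - Real.exp (-b)| ≤ |a - b| := by
  have key : ∀ x y : ℝ, 0 ≤ y → y ≤ x → |Real.exp (-x) - Real.exp (-y)| ≤ |x - y| := by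
    intro x y hy h
    have h1 : Real.exp (-x) ≤ Real.exp (-y) := Real.exp_le_exp.2 (by linarith)
    have h2 : Real.exp (-y) ≤ 1 := Real.exp_le_one_iff.2 (by linarith)
    have h3 : -(x - y) + 1 ≤ Real.exp (-(x - y)) := Real.add_one_le_exp _
    have h4 : Real.exp (-y) - Real.exp (-x) = Real.exp (-y) * (1 - Real.exp (-(x - y))) := by
      rw [mul_sub, mul_one, ← Real.exp_add]; ring_nf
    rw [abs_of_nonpos (by linarith), abs_of_nonneg (by linarith)]
    nlinarith [Real.exp_pos (-y), Real.exp_pos (-(x - y))]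
  rcases le_total b a with h | h
  · exact key a b hb h
  · rw [abs_sub_comm, abs_sub_comm a b]; exact key b a ha h

section Cone
variable {H : Type*} [NormedAddCommGroup H] [InnerProductSpace ℝ H] [CompleteSpace H]
variable {K : Set H} (hK : IsSelfDualCone K)
include hK

lemma sd_nonneg {x y : H} (hx : x ∈ K) (hy : y ∈ K) : 0 ≤ ⟪x, y⟫ := by
  rw [hK] at hx; exact hx y hy

lemma sd_mem {x : H} (h : ∀ y ∈ K, 0 ≤ ⟪x, y⟫) : x ∈ K := by
  rw [hK]; exact h

lemma sd_zero : (0 : H) ∈ K :=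
  sd_mem hK fun y _ => by simp

lemma sd_add {x y : H} (hx : x ∈ K) (hy : y ∈ K) : x + y ∈ K :=
  sd_mem hK fun z hz => by
    rw [inner_add_left]
    exact add_nonneg (sd_nonneg hK hx hz) (sd_nonneg hK hy hz)

lemma sd_smul {c : ℝ} (hc : 0 ≤ c) {x : H} (hx : x ∈ K) : c • x ∈ K :=
  sd_mem hK fun z hz => by
    rw [real_inner_smul_left]
    exact mul_nonneg hc (sd_nonneg hK hx hz)

lemma sd_closed : IsClosed K := by
  have : K = ⋂ y ∈ K, {x : H | 0 ≤ ⟪x, y⟫} := by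
    ext x
    simp only [Set.mem_iInter, Set.mem_setOf_eq]
    constructor
    · exact fun hx y hy => sd_nonneg hK hx hy
    · exact fun h => sd_mem hK h
  rw [this]
  exact isClosed_biInter fun y _ => isClosed_le continuous_const (continuous_id.inner continuous_const)

lemma sd_convex : Convex ℝ K := by
  intro x hx y hy a b ha hb _
  exact sd_add hK (sd_smul hK ha hx) (sd_smul hK hb hy)

lemma sd_moreau (z : H) : ∃ p ∈ K, ∃ q ∈ K, z = p - q ∧ ⟪p, q⟫ = 0 := by
  obtain ⟨v, hv, hmin⟩ := exists_norm_eq_iInf_of_complete_convex ⟨0, sd_zero hK⟩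
    ((sd_closed hK).isComplete) (sd_convex hK) z
  have hchar : ∀ w ∈ K, ⟪z - v, w - v⟫ ≤ 0 :=
    (norm_eq_iInf_iff_real_inner_le_zero (sd_convex hK) hv).1 hmin
  have hq : v - z ∈ K := by
    refine sd_mem hK fun y hy => ?_
    have h5 : ⟪z - v, y⟫ ≤ 0 := by
      simpa [add_sub_cancel_left] using hchar (v + y) (sd_add hK hv hy)
    have e : ⟪v - z, y⟫ = -⟪z - v, y⟫ := by
      rw [← inner_neg_left]; congr 1; abel
    rw [e]; linarith
  have h1 : ⟪z - v, v⟫ ≤ 0 := by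
    have := hchar ((2 : ℝ) • v) (sd_smul hK (by norm_num) hv)
    have e : (2 : ℝ) • v - v = v := by
      rw [two_smul]; abel
    rwa [e] at this
  have h2 : 0 ≤ ⟪z - v, v⟫ := by
    have := hchar ((1 / 2 : ℝ) • v) (sd_smul hK (by norm_num) hv)
    have e : (1 / 2 : ℝ) • v - v = -((1 / 2 : ℝ) • v) := by
      rw [← neg_smul]
      rw [show v = (1:ℝ) • v from (one_smul ℝ v).symm]
      module
    rw [e, inner_neg_right, real_inner_smul_right] at this
    linarith
  refine ⟨v, hv, v - z, hq, by abel, ?_⟩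
  rw [inner_sub_right]
  have : ⟪z - v, v⟫ = 0 := le_antisymm h1 h2
  have e : ⟪v, z⟫ - ⟪v, v⟫ = ⟪z - v, v⟫ := by
    rw [inner_sub_left, real_inner_comm]
  linarith [e, this]

lemma sd_norm_le {z a : H} (ha : a ∈ K) (h : ∀ x ∈ K, |⟪z, x⟫| ≤ ⟪a, x⟫) : ‖z‖ ≤ ‖a‖ := by
  obtain ⟨pp, hp, q, hq, hzpq, hpq⟩ := sd_moreau hK z
  have h1 : ⟪z, z⟫ = ⟪z, pp⟫ - ⟪z, q⟫ := by rw [hzpq, inner_sub_right]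
  have h2 : ⟪z, z⟫ ≤ ⟪a, pp + q⟫ := by
    rw [inner_add_right, h1]
    have := h pp hp
    have := h q hq
    have l1 : ⟪z, pp⟫ ≤ ⟪a, pp⟫ := le_trans (le_abs_self _) (h pp hp)
    have l2 : -⟪z, q⟫ ≤ ⟪a, q⟫ := le_trans (neg_le_abs _) (h q hq)
    linarith
  have hnorm : ‖pp + q‖ = ‖z‖ := by
    have e1 : ‖pp + q‖ ^ 2 = ‖pp‖ ^ 2 + 2 * ⟪pp, q⟫ + ‖q‖ ^ 2 := norm_add_sq_real pp q
    have e2 : ‖z‖ ^ 2 = ‖pp‖ ^ 2 - 2 * ⟪pp, q⟫ + ‖q‖ ^ 2 := by rw [hzpq]; exact norm_sub_sq_real pp q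
    have : ‖pp + q‖ ^ 2 = ‖z‖ ^ 2 := by rw [e1, e2, hpq]; ring
    nlinarith [norm_nonneg (pp + q), norm_nonneg z]
  have h3 : ‖z‖ ^ 2 ≤ ‖a‖ * ‖z‖ := by
    rw [← real_inner_self_eq_norm_sq]
    calc ⟪z, z⟫ ≤ ⟪a, pp + q⟫ := h2
    _ ≤ ‖a‖ * ‖pp + q‖ := real_inner_le_norm _ _
    _ = ‖a‖ * ‖z‖ := by rw [hnorm]
  nlinarith [norm_nonneg z, norm_nonneg a]

end Cone


set_option maxHeartbeats 1600000 in
/-- Properties of the derivative candidates `DR(u)` and `D²R(u)`: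
boundedness, linearity, quasi-monotonicity, norm estimates, Lipschitz dependence on `u`,
and continuity of `u ↦ D²R(u)(v,w)`. -/
theorem stmt_12 {H : Type*} [NormedAddCommGroup H] [InnerProductSpace ℝ H] [CompleteSpace H]
    [MeasurableSpace H] [BorelSpace H] (K : Set H)
    (hK : IsSelfDualCone K) (hKgen : ∀ z : H, ∃ x ∈ K, ∃ y ∈ K, z = x - y)
    (p : AdmissibleParams H K)
    (DR : H → H → H)
    (hDR : ∀ u ∈ K, ∀ v : H, ∀ x ∈ K, ⟪DR u v, x⟫ =
      ⟪ContinuousLinearMap.adjoint p.B v, x⟫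
        + ∫ ξ in K \ {0}, (⟪ξ, v⟫ * Real.exp (-⟪ξ, u⟫) - ⟪trunc ξ, v⟫) / ‖ξ‖ ^ 2 ∂(p.ν x))
    (D2R : H → H → H → H)
    (hD2R : ∀ u ∈ K, ∀ v w : H, ∀ x ∈ K, ⟪D2R u v w, x⟫ =
      -∫ ξ in K \ {0}, (⟪ξ, v⟫ * ⟪ξ, w⟫ * Real.exp (-⟪ξ, u⟫)) / ‖ξ‖ ^ 2 ∂(p.ν x)) :
    -- (a) `DR(u)` is a bounded linear operator, quasi-monotone with respect to `K`
    (∀ u ∈ K, (∃ T : H →L[ℝ] H, ∀ v : H, T v = DR u v) ∧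
      (∀ v₁ v₂ : H, v₂ - v₁ ∈ K → ∀ x ∈ K, ⟪v₂ - v₁, x⟫ = 0 →
        0 ≤ ⟪DR u v₂ - DR u v₁, x⟫)) ∧
    -- (b) norm bound for `DR(u₀)`
    (∀ u₀ ∈ K, ∀ v : H,
      ‖DR u₀ v‖ ≤ ‖ContinuousLinearMap.adjoint p.B‖ * ‖v‖
        + ‖p.muVec (K \ {0})‖ * (1 + ‖u₀‖) * ‖v‖) ∧
    -- (c) Lipschitz dependence on the base point
    (∀ u₀ ∈ K, ∀ u₁ ∈ K, ∀ v : H,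
      ‖DR u₀ v - DR u₁ v‖ ≤ ‖p.muVec (K \ {0})‖ * ‖u₀ - u₁‖ * ‖v‖) ∧
    -- (d) norm bound for `D²R(u₀)`
    (∀ u₀ ∈ K, ∀ v w : H, ‖D2R u₀ v w‖ ≤ ‖p.muVec (K \ {0})‖ * ‖v‖ * ‖w‖) ∧
    -- (e) continuity of `u ↦ D²R(u)(v,w)` on `K`
    (∀ v w : H, ContinuousOn (fun u => D2R u v w) K) := by
  classical
  have hmeasN : MeasurableSet (K \ {0} : Set H) :=
    (sd_closed hK).measurableSet.diff (measurableSet_singleton 0)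
  have hνfin : ∀ x ∈ K, p.ν x (K \ {0}) < ∞ := fun x hx => by
    haveI := p.ν_finite x hx; exact measure_lt_top _ _
  -- extensionality via K - K = H
  have hext : ∀ z₁ z₂ : H, (∀ x ∈ K, ⟪z₁, x⟫ = ⟪z₂, x⟫) → z₁ = z₂ := by
    intro z₁ z₂ h
    have hall : ∀ x : H, ⟪z₁ - z₂, x⟫ = 0 := by
      intro x
      obtain ⟨a, ha, b, hb, rfl⟩ := hKgen x
      rw [inner_sub_right, inner_sub_left, inner_sub_left, h a ha, h b hb]; ring
    have h0 := hall (z₁ - z₂)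
    rw [inner_self_eq_zero, sub_eq_zero] at h0
    exact h0
  -- measurability
  have hmeas_inner : ∀ v : H, Measurable fun ξ : H => ⟪ξ, v⟫ := fun v =>
    (continuous_id.inner continuous_const).measurable
  have hmeas_trunc : ∀ v : H, Measurable fun ξ : H => (⟪trunc ξ, v⟫ : ℝ) := by
    intro v
    have e : (fun ξ : H => (⟪trunc ξ, v⟫ : ℝ)) = fun ξ => if ‖ξ‖ ≤ 1 then ⟪ξ, v⟫ else 0 := by
      funext ξ; simp only [trunc]; split <;> simp
    rw [e]
    exact Measurable.ite (measurableSet_le measurable_norm measurable_const)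
      (hmeas_inner v) measurable_const
  have hmeas_ψ : ∀ u v : H, Measurable fun ξ : H =>
      (⟪ξ, v⟫ * Real.exp (-⟪ξ, u⟫) - ⟪trunc ξ, v⟫) / ‖ξ‖ ^ 2 := fun u v =>
    (((hmeas_inner v).mul (Real.measurable_exp.comp (hmeas_inner u).neg)).sub
      (hmeas_trunc v)).div (measurable_norm.pow_const 2)
  have hmeas_φ : ∀ u v w : H, Measurable fun ξ : H =>
      (⟪ξ, v⟫ * ⟪ξ, w⟫ * Real.exp (-⟪ξ, u⟫)) / ‖ξ‖ ^ 2 := fun u v w =>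
    (((hmeas_inner v).mul (hmeas_inner w)).mul
      (Real.measurable_exp.comp (hmeas_inner u).neg)).div (measurable_norm.pow_const 2)
  -- pointwise bounds
  have hψ_bound : ∀ u ∈ K, ∀ v : H, ∀ ξ ∈ K \ ({0} : Set H),
      |(⟪ξ, v⟫ * Real.exp (-⟪ξ, u⟫) - ⟪trunc ξ, v⟫) / ‖ξ‖ ^ 2| ≤ (1 + ‖u‖) * ‖v‖ := by
    intro u hu v ξ hξ
    have hξ0 : ξ ≠ 0 := by simpa using hξ.2
    have hn : 0 < ‖ξ‖ := norm_pos_iff.2 hξ0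
    have ha : 0 ≤ ⟪ξ, u⟫ := sd_nonneg hK hξ.1 hu
    have hiv : |⟪ξ, v⟫| ≤ ‖ξ‖ * ‖v‖ := abs_real_inner_le_norm ξ v
    rw [abs_div, abs_of_nonneg (by positivity : (0:ℝ) ≤ ‖ξ‖ ^ 2), div_le_iff₀ (by positivity)]
    by_cases h1 : ‖ξ‖ ≤ 1
    · have htr : trunc ξ = ξ := if_pos h1
      rw [htr]
      have e : ⟪ξ, v⟫ * Real.exp (-⟪ξ, u⟫) - ⟪ξ, v⟫ = ⟪ξ, v⟫ * (Real.exp (-⟪ξ, u⟫) - 1) := by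
        ring
      rw [e, abs_mul]
      have he : |Real.exp (-⟪ξ, u⟫) - 1| ≤ ⟪ξ, u⟫ := by
        simpa [abs_of_nonneg ha] using exp_neg_lip ha (le_refl (0:ℝ))
      have hiu : ⟪ξ, u⟫ ≤ ‖ξ‖ * ‖u‖ := real_inner_le_norm ξ u
      calc |⟪ξ, v⟫| * |Real.exp (-⟪ξ, u⟫) - 1| ≤ (‖ξ‖ * ‖v‖) * (‖ξ‖ * ‖u‖) :=
            mul_le_mul hiv (le_trans he hiu) (abs_nonneg _) (by positivity)
        _ ≤ (1 + ‖u‖) * ‖v‖ * ‖ξ‖ ^ 2 := by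
            nlinarith [mul_nonneg (norm_nonneg v) (sq_nonneg ‖ξ‖)]
    · have htr : trunc ξ = 0 := if_neg h1
      rw [htr]
      have h1' : 1 < ‖ξ‖ := lt_of_not_ge h1
      have he : |Real.exp (-⟪ξ, u⟫)| ≤ 1 := by
        rw [abs_of_pos (Real.exp_pos _)]
        exact Real.exp_le_one_iff.2 (by linarith)
      have h2 : |⟪ξ, v⟫ * Real.exp (-⟪ξ, u⟫) - ⟪0, v⟫| ≤ ‖ξ‖ * ‖v‖ := by
        rw [inner_zero_left, sub_zero, abs_mul]
        calc |⟪ξ, v⟫| * |Real.exp (-⟪ξ, u⟫)| ≤ (‖ξ‖ * ‖v‖) * 1 :=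
              mul_le_mul hiv he (abs_nonneg _) (by positivity)
          _ = ‖ξ‖ * ‖v‖ := mul_one _
      refine le_trans h2 ?_
      nlinarith [mul_nonneg (norm_nonneg v) (mul_nonneg hn.le (by linarith : (0:ℝ) ≤ ‖ξ‖ - 1)),
        mul_nonneg (mul_nonneg (norm_nonneg u) (norm_nonneg v)) (sq_nonneg ‖ξ‖)]
  have hφ_bound : ∀ u ∈ K, ∀ v w : H, ∀ ξ ∈ K \ ({0} : Set H),
      |(⟪ξ, v⟫ * ⟪ξ, w⟫ * Real.exp (-⟪ξ, u⟫)) / ‖ξ‖ ^ 2| ≤ ‖v‖ * ‖w‖ := by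
    intro u hu v w ξ hξ
    have hξ0 : ξ ≠ 0 := by simpa using hξ.2
    have hn : 0 < ‖ξ‖ := norm_pos_iff.2 hξ0
    have ha : 0 ≤ ⟪ξ, u⟫ := sd_nonneg hK hξ.1 hu
    have hiv : |⟪ξ, v⟫| ≤ ‖ξ‖ * ‖v‖ := abs_real_inner_le_norm ξ v
    have hiw : |⟪ξ, w⟫| ≤ ‖ξ‖ * ‖w‖ := abs_real_inner_le_norm ξ w
    have he : |Real.exp (-⟪ξ, u⟫)| ≤ 1 := by
      rw [abs_of_pos (Real.exp_pos _)]
      exact Real.exp_le_one_iff.2 (by linarith)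
    rw [abs_div, abs_of_nonneg (by positivity : (0:ℝ) ≤ ‖ξ‖ ^ 2), div_le_iff₀ (by positivity),
      abs_mul, abs_mul]
    have h2 : |⟪ξ, v⟫| * |⟪ξ, w⟫| ≤ (‖ξ‖ * ‖v‖) * (‖ξ‖ * ‖w‖) :=
      mul_le_mul hiv hiw (abs_nonneg _) (by positivity)
    calc |⟪ξ, v⟫| * |⟪ξ, w⟫| * |Real.exp (-⟪ξ, u⟫)| ≤ ((‖ξ‖ * ‖v‖) * (‖ξ‖ * ‖w‖)) * 1 :=
          mul_le_mul h2 he (abs_nonneg _) (by positivity)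
      _ = ‖v‖ * ‖w‖ * ‖ξ‖ ^ 2 := by ring
  -- integrability
  have hψ_int : ∀ u ∈ K, ∀ v : H, ∀ x ∈ K, IntegrableOn
      (fun ξ : H => (⟪ξ, v⟫ * Real.exp (-⟪ξ, u⟫) - ⟪trunc ξ, v⟫) / ‖ξ‖ ^ 2)
      (K \ {0}) (p.ν x) := by
    intro u hu v x hx
    haveI := p.ν_finite x hx
    refine ⟨(hmeas_ψ u v).stronglyMeasurable.aestronglyMeasurable, ?_⟩
    apply HasFiniteIntegral.of_bounded (C := (1 + ‖u‖) * ‖v‖)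
    refine (ae_restrict_iff' hmeasN).2 (Eventually.of_forall fun ξ hξ => ?_)
    rw [Real.norm_eq_abs]; exact hψ_bound u hu v ξ hξ
  have hφ_int : ∀ u ∈ K, ∀ v w : H, ∀ x ∈ K, IntegrableOn
      (fun ξ : H => (⟪ξ, v⟫ * ⟪ξ, w⟫ * Real.exp (-⟪ξ, u⟫)) / ‖ξ‖ ^ 2)
      (K \ {0}) (p.ν x) := by
    intro u hu v w x hx
    haveI := p.ν_finite x hx
    refine ⟨(hmeas_φ u v w).stronglyMeasurable.aestronglyMeasurable, ?_⟩
    apply HasFiniteIntegral.of_bounded (C := ‖v‖ * ‖w‖)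
    refine (ae_restrict_iff' hmeasN).2 (Eventually.of_forall fun ξ hξ => ?_)
    rw [Real.norm_eq_abs]; exact hφ_bound u hu v w ξ hξ
  -- key norm bound via muVec
  have hμtot : p.muVec (K \ {0}) ∈ K := p.muVec_mem _ hmeasN
  have hμspec : ∀ x ∈ K, ⟪p.muVec (K \ {0}), x⟫ = (p.ν x (K \ {0})).toReal :=
    p.muVec_spec _ hmeasN
  have keyBound : ∀ (z : H) (C : ℝ), 0 ≤ C →
      (∀ x ∈ K, |⟪z, x⟫| ≤ C * (p.ν x (K \ {0})).toReal) →
      ‖z‖ ≤ C * ‖p.muVec (K \ {0})‖ := by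
    intro z C hC h
    have h2 := sd_norm_le hK (z := z) (sd_smul hK hC hμtot) (fun x hx => by
      rw [real_inner_smul_left, hμspec x hx]; exact h x hx)
    rwa [norm_smul, Real.norm_eq_abs, abs_of_nonneg hC] at h2
  -- part (b)
  have partb : ∀ u₀ ∈ K, ∀ v : H,
      ‖DR u₀ v‖ ≤ ‖ContinuousLinearMap.adjoint p.B‖ * ‖v‖
        + ‖p.muVec (K \ {0})‖ * (1 + ‖u₀‖) * ‖v‖ := by
    intro u₀ hu₀ v
    have hzb : ‖DR u₀ v - ContinuousLinearMap.adjoint p.B v‖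
        ≤ ((1 + ‖u₀‖) * ‖v‖) * ‖p.muVec (K \ {0})‖ := by
      apply keyBound _ _ (by positivity)
      intro x hx
      have h1 : ⟪DR u₀ v - ContinuousLinearMap.adjoint p.B v, x⟫
          = ∫ ξ in K \ {0}, (⟪ξ, v⟫ * Real.exp (-⟪ξ, u₀⟫) - ⟪trunc ξ, v⟫) / ‖ξ‖ ^ 2 ∂p.ν x := by
        rw [inner_sub_left, hDR u₀ hu₀ v x hx]; ring
      rw [h1, ← Real.norm_eq_abs]
      exact norm_setIntegral_le_of_norm_le_const (hνfin x hx) fun ξ hξ => by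
        rw [Real.norm_eq_abs]; exact hψ_bound u₀ hu₀ v ξ hξ
    have h3 : ‖DR u₀ v‖ ≤ ‖ContinuousLinearMap.adjoint p.B v‖
        + ‖DR u₀ v - ContinuousLinearMap.adjoint p.B v‖ := by
      have := norm_add_le (ContinuousLinearMap.adjoint p.B v)
        (DR u₀ v - ContinuousLinearMap.adjoint p.B v)
      simpa using this
    have h4 := ContinuousLinearMap.le_opNorm (ContinuousLinearMap.adjoint p.B) v
    nlinarith [norm_nonneg v]
  -- part (c)
  have partc : ∀ u₀ ∈ K, ∀ u₁ ∈ K, ∀ v : H,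
      ‖DR u₀ v - DR u₁ v‖ ≤ ‖p.muVec (K \ {0})‖ * ‖u₀ - u₁‖ * ‖v‖ := by
    intro u₀ hu₀ u₁ hu₁ v
    have hzb : ‖DR u₀ v - DR u₁ v‖ ≤ (‖u₀ - u₁‖ * ‖v‖) * ‖p.muVec (K \ {0})‖ := by
      apply keyBound _ _ (by positivity)
      intro x hx
      have h1 : ⟪DR u₀ v - DR u₁ v, x⟫
          = ∫ ξ in K \ {0},
              ((⟪ξ, v⟫ * Real.exp (-⟪ξ, u₀⟫) - ⟪trunc ξ, v⟫) / ‖ξ‖ ^ 2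
                - (⟪ξ, v⟫ * Real.exp (-⟪ξ, u₁⟫) - ⟪trunc ξ, v⟫) / ‖ξ‖ ^ 2) ∂p.ν x := by
        rw [integral_sub (hψ_int u₀ hu₀ v x hx) (hψ_int u₁ hu₁ v x hx),
          inner_sub_left, hDR u₀ hu₀ v x hx, hDR u₁ hu₁ v x hx]
        ring
      rw [h1, ← Real.norm_eq_abs]
      apply norm_setIntegral_le_of_norm_le_const (hνfin x hx)
      intro ξ hξ
      have hξ0 : ξ ≠ 0 := by simpa using hξ.2
      have hn : 0 < ‖ξ‖ := norm_pos_iff.2 hξ0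
      have ha0 : 0 ≤ ⟪ξ, u₀⟫ := sd_nonneg hK hξ.1 hu₀
      have ha1 : 0 ≤ ⟪ξ, u₁⟫ := sd_nonneg hK hξ.1 hu₁
      have e : (⟪ξ, v⟫ * Real.exp (-⟪ξ, u₀⟫) - ⟪trunc ξ, v⟫) / ‖ξ‖ ^ 2
          - (⟪ξ, v⟫ * Real.exp (-⟪ξ, u₁⟫) - ⟪trunc ξ, v⟫) / ‖ξ‖ ^ 2
          = ⟪ξ, v⟫ * (Real.exp (-⟪ξ, u₀⟫) - Real.exp (-⟪ξ, u₁⟫)) / ‖ξ‖ ^ 2 := by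
        ring
      rw [Real.norm_eq_abs, e, abs_div, abs_of_nonneg (by positivity : (0:ℝ) ≤ ‖ξ‖ ^ 2),
        div_le_iff₀ (by positivity), abs_mul]
      have he : |Real.exp (-⟪ξ, u₀⟫) - Real.exp (-⟪ξ, u₁⟫)| ≤ ‖ξ‖ * ‖u₀ - u₁‖ := by
        refine le_trans (exp_neg_lip ha0 ha1) ?_
        have e2 : ⟪ξ, u₀⟫ - ⟪ξ, u₁⟫ = ⟪ξ, u₀ - u₁⟫ := (inner_sub_right ξ u₀ u₁).symm
        rw [e2]
        exact abs_real_inner_le_norm ξ (u₀ - u₁)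
      have hiv : |⟪ξ, v⟫| ≤ ‖ξ‖ * ‖v‖ := abs_real_inner_le_norm ξ v
      calc |⟪ξ, v⟫| * |Real.exp (-⟪ξ, u₀⟫) - Real.exp (-⟪ξ, u₁⟫)|
          ≤ (‖ξ‖ * ‖v‖) * (‖ξ‖ * ‖u₀ - u₁‖) :=
            mul_le_mul hiv he (abs_nonneg _) (by positivity)
        _ = ‖u₀ - u₁‖ * ‖v‖ * ‖ξ‖ ^ 2 := by ring
    have e3 : (‖u₀ - u₁‖ * ‖v‖) * ‖p.muVec (K \ {0})‖
        = ‖p.muVec (K \ {0})‖ * ‖u₀ - u₁‖ * ‖v‖ := by ring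
    linarith
  -- part (d)
  have partd : ∀ u₀ ∈ K, ∀ v w : H, ‖D2R u₀ v w‖ ≤ ‖p.muVec (K \ {0})‖ * ‖v‖ * ‖w‖ := by
    intro u₀ hu₀ v w
    have hzb : ‖D2R u₀ v w‖ ≤ (‖v‖ * ‖w‖) * ‖p.muVec (K \ {0})‖ := by
      apply keyBound _ _ (by positivity)
      intro x hx
      rw [hD2R u₀ hu₀ v w x hx, abs_neg, ← Real.norm_eq_abs]
      exact norm_setIntegral_le_of_norm_le_const (hνfin x hx) fun ξ hξ => by
        rw [Real.norm_eq_abs]; exact hφ_bound u₀ hu₀ v w ξ hξ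
    have e3 : (‖v‖ * ‖w‖) * ‖p.muVec (K \ {0})‖ = ‖p.muVec (K \ {0})‖ * ‖v‖ * ‖w‖ := by ring
    linarith
  refine ⟨?_, partb, partc, partd, ?_⟩
  · -- part (a)
    intro u hu
    constructor
    · -- bounded linear operator
      have hadd : ∀ v v' : H, DR u (v + v') = DR u v + DR u v' := by
        intro v v'
        refine hext _ _ fun x hx => ?_
        rw [inner_add_left, hDR u hu (v + v') x hx, hDR u hu v x hx, hDR u hu v' x hx, map_add,
          inner_add_left]
        have e : ∫ ξ in K \ {0},
              (⟪ξ, v + v'⟫ * Real.exp (-⟪ξ, u⟫) - ⟪trunc ξ, v + v'⟫) / ‖ξ‖ ^ 2 ∂p.ν x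
            = (∫ ξ in K \ {0}, (⟪ξ, v⟫ * Real.exp (-⟪ξ, u⟫) - ⟪trunc ξ, v⟫) / ‖ξ‖ ^ 2 ∂p.ν x)
              + ∫ ξ in K \ {0},
                  (⟪ξ, v'⟫ * Real.exp (-⟪ξ, u⟫) - ⟪trunc ξ, v'⟫) / ‖ξ‖ ^ 2 ∂p.ν x := by
          rw [← integral_add (hψ_int u hu v x hx) (hψ_int u hu v' x hx)]
          refine integral_congr_ae (Eventually.of_forall fun ξ => ?_)
          simp only [inner_add_right]
          ring
        rw [e]; ring
      have hsmul : ∀ (c : ℝ) (v : H), DR u (c • v) = c • DR u v := by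
        intro c v
        refine hext _ _ fun x hx => ?_
        rw [real_inner_smul_left, hDR u hu (c • v) x hx, hDR u hu v x hx, _root_.map_smul,
          real_inner_smul_left]
        have e : ∫ ξ in K \ {0},
              (⟪ξ, c • v⟫ * Real.exp (-⟪ξ, u⟫) - ⟪trunc ξ, c • v⟫) / ‖ξ‖ ^ 2 ∂p.ν x
            = c * ∫ ξ in K \ {0},
                (⟪ξ, v⟫ * Real.exp (-⟪ξ, u⟫) - ⟪trunc ξ, v⟫) / ‖ξ‖ ^ 2 ∂p.ν x := by
          rw [← integral_const_mul]
          refine integral_congr_ae (Eventually.of_forall fun ξ => ?_)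
          simp only [real_inner_smul_right]
          ring
        rw [e]; ring
      refine ⟨LinearMap.mkContinuous
        { toFun := DR u, map_add' := hadd, map_smul' := hsmul }
        (‖ContinuousLinearMap.adjoint p.B‖ + ‖p.muVec (K \ {0})‖ * (1 + ‖u‖))
        (fun v => ?_), fun v => rfl⟩
      have hpb := partb u hu v
      have hpb2 : ‖DR u v‖
          ≤ (‖ContinuousLinearMap.adjoint p.B‖ + ‖p.muVec (K \ {0})‖ * (1 + ‖u‖)) * ‖v‖ := by
        have e : (‖ContinuousLinearMap.adjoint p.B‖ + ‖p.muVec (K \ {0})‖ * (1 + ‖u‖)) * ‖v‖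
            = ‖ContinuousLinearMap.adjoint p.B‖ * ‖v‖
              + ‖p.muVec (K \ {0})‖ * (1 + ‖u‖) * ‖v‖ := by ring
        rw [e]; exact hpb
      exact hpb2
    · -- quasi-monotone
      intro v₁ v₂ hw x hx hwx
      have hg_int := p.ν_int (v₂ - v₁) hw x hx hwx
      have hψw_int := hψ_int u hu (v₂ - v₁) x hx
      have hf_int : IntegrableOn (fun ξ : H => ⟪ξ, v₂ - v₁⟫ * Real.exp (-⟪ξ, u⟫) / ‖ξ‖ ^ 2)
          (K \ {0}) (p.ν x) := by
        have e : (fun ξ : H => ⟪ξ, v₂ - v₁⟫ * Real.exp (-⟪ξ, u⟫) / ‖ξ‖ ^ 2)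
            = fun ξ => (⟪ξ, v₂ - v₁⟫ * Real.exp (-⟪ξ, u⟫) - ⟪trunc ξ, v₂ - v₁⟫) / ‖ξ‖ ^ 2
              + ⟪trunc ξ, v₂ - v₁⟫ / ‖ξ‖ ^ 2 := by
          funext ξ; ring
        rw [e]; exact hψw_int.add hg_int
      have hf_nonneg : 0 ≤ ∫ ξ in K \ {0}, ⟪ξ, v₂ - v₁⟫ * Real.exp (-⟪ξ, u⟫) / ‖ξ‖ ^ 2 ∂p.ν x := by
        refine setIntegral_nonneg hmeasN fun ξ hξ => ?_
        have h1 : 0 ≤ ⟪ξ, v₂ - v₁⟫ := sd_nonneg hK hξ.1 hw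
        positivity
      have hsplit : ∫ ξ in K \ {0},
            (⟪ξ, v₂ - v₁⟫ * Real.exp (-⟪ξ, u⟫) - ⟪trunc ξ, v₂ - v₁⟫) / ‖ξ‖ ^ 2 ∂p.ν x
          = (∫ ξ in K \ {0}, ⟪ξ, v₂ - v₁⟫ * Real.exp (-⟪ξ, u⟫) / ‖ξ‖ ^ 2 ∂p.ν x)
            - ∫ ξ in K \ {0}, ⟪trunc ξ, v₂ - v₁⟫ / ‖ξ‖ ^ 2 ∂p.ν x := by
        rw [← integral_sub hf_int hg_int]
        exact integral_congr_ae (Eventually.of_forall fun ξ => by ring)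
      have hBq := p.B_quasi (v₂ - v₁) hw x hx hwx
      have eB : ⟪ContinuousLinearMap.adjoint p.B (v₂ - v₁), x⟫
          = ⟪ContinuousLinearMap.adjoint p.B v₂, x⟫
            - ⟪ContinuousLinearMap.adjoint p.B v₁, x⟫ := by
        rw [map_sub, inner_sub_left]
      have eI : ∫ ξ in K \ {0},
            (⟪ξ, v₂ - v₁⟫ * Real.exp (-⟪ξ, u⟫) - ⟪trunc ξ, v₂ - v₁⟫) / ‖ξ‖ ^ 2 ∂p.ν x
          = (∫ ξ in K \ {0}, (⟪ξ, v₂⟫ * Real.exp (-⟪ξ, u⟫) - ⟪trunc ξ, v₂⟫) / ‖ξ‖ ^ 2 ∂p.ν x)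
            - ∫ ξ in K \ {0}, (⟪ξ, v₁⟫ * Real.exp (-⟪ξ, u⟫) - ⟪trunc ξ, v₁⟫) / ‖ξ‖ ^ 2 ∂p.ν x := by
        rw [← integral_sub (hψ_int u hu v₂ x hx) (hψ_int u hu v₁ x hx)]
        refine integral_congr_ae (Eventually.of_forall fun ξ => ?_)
        simp only [inner_sub_right]
        ring
      have h2 : ⟪DR u v₂ - DR u v₁, x⟫
          = ⟪ContinuousLinearMap.adjoint p.B (v₂ - v₁), x⟫
            + ∫ ξ in K \ {0},
                (⟪ξ, v₂ - v₁⟫ * Real.exp (-⟪ξ, u⟫) - ⟪trunc ξ, v₂ - v₁⟫) / ‖ξ‖ ^ 2 ∂p.ν x := by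
        rw [inner_sub_left, hDR u hu v₂ x hx, hDR u hu v₁ x hx, eB, eI]
        ring
      rw [h2, hsplit]
      linarith
  · -- part (e)
    intro v w u₀ hu₀
    have he_bound : ∀ R : ℝ, 0 ≤ R → ∀ u ∈ K, ∀ u' ∈ K,
        ‖D2R u v w - D2R u' v w‖
          ≤ ‖v‖ * ‖w‖ * (R * ‖u - u'‖) * ‖p.muVec (K \ {0})‖
            + ‖v‖ * ‖w‖ * ‖p.muVec ((K \ {0}) ∩ {ξ | R < ‖ξ‖})‖ := by
      intro R hR u hu u' hu'
      have hmeasS : MeasurableSet ((K \ {0}) ∩ {ξ : H | R < ‖ξ‖}) :=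
        hmeasN.inter (measurableSet_lt measurable_const measurable_norm)
      have hμS : p.muVec ((K \ {0}) ∩ {ξ | R < ‖ξ‖}) ∈ K := p.muVec_mem _ hmeasS
      have hc1 : (0:ℝ) ≤ ‖v‖ * ‖w‖ * (R * ‖u - u'‖) := by positivity
      have hc2 : (0:ℝ) ≤ ‖v‖ * ‖w‖ := by positivity
      have haK : (‖v‖ * ‖w‖ * (R * ‖u - u'‖)) • p.muVec (K \ {0})
          + (‖v‖ * ‖w‖) • p.muVec ((K \ {0}) ∩ {ξ | R < ‖ξ‖}) ∈ K :=
        sd_add hK (sd_smul hK hc1 hμtot) (sd_smul hK hc2 hμS)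
      have key : ∀ x ∈ K, |⟪D2R u v w - D2R u' v w, x⟫|
          ≤ ⟪(‖v‖ * ‖w‖ * (R * ‖u - u'‖)) • p.muVec (K \ {0})
              + (‖v‖ * ‖w‖) • p.muVec ((K \ {0}) ∩ {ξ | R < ‖ξ‖}), x⟫ := by
        intro x hx
        haveI := p.ν_finite x hx
        have hg_int : IntegrableOn (fun ξ : H =>
            (⟪ξ, v⟫ * ⟪ξ, w⟫ * Real.exp (-⟪ξ, u⟫)) / ‖ξ‖ ^ 2
              - (⟪ξ, v⟫ * ⟪ξ, w⟫ * Real.exp (-⟪ξ, u'⟫)) / ‖ξ‖ ^ 2) (K \ {0}) (p.ν x) :=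
          (hφ_int u hu v w x hx).sub (hφ_int u' hu' v w x hx)
        have hsub : ⟪D2R u v w - D2R u' v w, x⟫
            = -∫ ξ in K \ {0},
                ((⟪ξ, v⟫ * ⟪ξ, w⟫ * Real.exp (-⟪ξ, u⟫)) / ‖ξ‖ ^ 2
                  - (⟪ξ, v⟫ * ⟪ξ, w⟫ * Real.exp (-⟪ξ, u'⟫)) / ‖ξ‖ ^ 2) ∂p.ν x := by
          rw [integral_sub (hφ_int u hu v w x hx) (hφ_int u' hu' v w x hx), inner_sub_left,
            hD2R u hu v w x hx, hD2R u' hu' v w x hx]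
          ring
        have hunion : (K \ {0} : Set H)
            = ((K \ {0}) ∩ {ξ | ‖ξ‖ ≤ R}) ∪ ((K \ {0}) ∩ {ξ | R < ‖ξ‖}) := by
          ext ξ
          constructor
          · intro hξ
            rcases le_or_gt ‖ξ‖ R with h | h
            · exact Or.inl ⟨hξ, h⟩
            · exact Or.inr ⟨hξ, h⟩
          · rintro (⟨h, _⟩ | ⟨h, _⟩) <;> exact h
        have hdisj : Disjoint ((K \ {0}) ∩ {ξ : H | ‖ξ‖ ≤ R}) ((K \ {0}) ∩ {ξ | R < ‖ξ‖}) := by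
          refine Set.disjoint_left.2 ?_
          rintro ξ ⟨_, h1⟩ ⟨_, h2⟩
          exact absurd (show ‖ξ‖ ≤ R from h1) (not_le.2 (show R < ‖ξ‖ from h2))
        have hI1 : IntegrableOn (fun ξ : H =>
            (⟪ξ, v⟫ * ⟪ξ, w⟫ * Real.exp (-⟪ξ, u⟫)) / ‖ξ‖ ^ 2
              - (⟪ξ, v⟫ * ⟪ξ, w⟫ * Real.exp (-⟪ξ, u'⟫)) / ‖ξ‖ ^ 2)
            ((K \ {0}) ∩ {ξ | ‖ξ‖ ≤ R}) (p.ν x) :=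
          hg_int.mono_set Set.inter_subset_left
        have hI2 : IntegrableOn (fun ξ : H =>
            (⟪ξ, v⟫ * ⟪ξ, w⟫ * Real.exp (-⟪ξ, u⟫)) / ‖ξ‖ ^ 2
              - (⟪ξ, v⟫ * ⟪ξ, w⟫ * Real.exp (-⟪ξ, u'⟫)) / ‖ξ‖ ^ 2)
            ((K \ {0}) ∩ {ξ | R < ‖ξ‖}) (p.ν x) :=
          hg_int.mono_set Set.inter_subset_left
        have hsplitI : ∫ ξ in K \ {0},
              ((⟪ξ, v⟫ * ⟪ξ, w⟫ * Real.exp (-⟪ξ, u⟫)) / ‖ξ‖ ^ 2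
                - (⟪ξ, v⟫ * ⟪ξ, w⟫ * Real.exp (-⟪ξ, u'⟫)) / ‖ξ‖ ^ 2) ∂p.ν x
            = (∫ ξ in (K \ {0}) ∩ {ξ | ‖ξ‖ ≤ R},
                ((⟪ξ, v⟫ * ⟪ξ, w⟫ * Real.exp (-⟪ξ, u⟫)) / ‖ξ‖ ^ 2
                  - (⟪ξ, v⟫ * ⟪ξ, w⟫ * Real.exp (-⟪ξ, u'⟫)) / ‖ξ‖ ^ 2) ∂p.ν x)
              + ∫ ξ in (K \ {0}) ∩ {ξ | R < ‖ξ‖},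
                ((⟪ξ, v⟫ * ⟪ξ, w⟫ * Real.exp (-⟪ξ, u⟫)) / ‖ξ‖ ^ 2
                  - (⟪ξ, v⟫ * ⟪ξ, w⟫ * Real.exp (-⟪ξ, u'⟫)) / ‖ξ‖ ^ 2) ∂p.ν x := by
          conv_lhs => rw [hunion]
          exact setIntegral_union hdisj hmeasS hI1 hI2
        -- pointwise bounds
        have hpoint : ∀ ξ ∈ K \ ({0} : Set H),
            |(⟪ξ, v⟫ * ⟪ξ, w⟫ * Real.exp (-⟪ξ, u⟫)) / ‖ξ‖ ^ 2
              - (⟪ξ, v⟫ * ⟪ξ, w⟫ * Real.exp (-⟪ξ, u'⟫)) / ‖ξ‖ ^ 2|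
              ≤ ‖v‖ * ‖w‖ * min 1 (‖ξ‖ * ‖u - u'‖) := by
          intro ξ hξ
          have hξ0 : ξ ≠ 0 := by simpa using hξ.2
          have hn : 0 < ‖ξ‖ := norm_pos_iff.2 hξ0
          have ha : 0 ≤ ⟪ξ, u⟫ := sd_nonneg hK hξ.1 hu
          have ha' : 0 ≤ ⟪ξ, u'⟫ := sd_nonneg hK hξ.1 hu'
          have hiv : |⟪ξ, v⟫| ≤ ‖ξ‖ * ‖v‖ := abs_real_inner_le_norm ξ v
          have hiw : |⟪ξ, w⟫| ≤ ‖ξ‖ * ‖w‖ := abs_real_inner_le_norm ξ w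
          have he1 : |Real.exp (-⟪ξ, u⟫) - Real.exp (-⟪ξ, u'⟫)| ≤ 1 := by
            have e1 : Real.exp (-⟪ξ, u⟫) ≤ 1 := Real.exp_le_one_iff.2 (by linarith)
            have e2 : Real.exp (-⟪ξ, u'⟫) ≤ 1 := Real.exp_le_one_iff.2 (by linarith)
            rw [abs_sub_le_iff]
            constructor <;> nlinarith [Real.exp_pos (-⟪ξ, u⟫), Real.exp_pos (-⟪ξ, u'⟫)]
          have he2 : |Real.exp (-⟪ξ, u⟫) - Real.exp (-⟪ξ, u'⟫)| ≤ ‖ξ‖ * ‖u - u'‖ := by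
            refine le_trans (exp_neg_lip ha ha') ?_
            have e2 : ⟪ξ, u⟫ - ⟪ξ, u'⟫ = ⟪ξ, u - u'⟫ := (inner_sub_right ξ u u').symm
            rw [e2]
            exact abs_real_inner_le_norm ξ (u - u')
          have he3 : |Real.exp (-⟪ξ, u⟫) - Real.exp (-⟪ξ, u'⟫)| ≤ min 1 (‖ξ‖ * ‖u - u'‖) :=
            le_min he1 he2
          have e : (⟪ξ, v⟫ * ⟪ξ, w⟫ * Real.exp (-⟪ξ, u⟫)) / ‖ξ‖ ^ 2
              - (⟪ξ, v⟫ * ⟪ξ, w⟫ * Real.exp (-⟪ξ, u'⟫)) / ‖ξ‖ ^ 2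
              = ⟪ξ, v⟫ * ⟪ξ, w⟫ * (Real.exp (-⟪ξ, u⟫) - Real.exp (-⟪ξ, u'⟫)) / ‖ξ‖ ^ 2 := by
            ring
          rw [e, abs_div, abs_of_nonneg (by positivity : (0:ℝ) ≤ ‖ξ‖ ^ 2),
            div_le_iff₀ (by positivity), abs_mul, abs_mul]
          have h2 : |⟪ξ, v⟫| * |⟪ξ, w⟫| ≤ (‖ξ‖ * ‖v‖) * (‖ξ‖ * ‖w‖) :=
            mul_le_mul hiv hiw (abs_nonneg _) (by positivity)
          have hmin0 : 0 ≤ min 1 (‖ξ‖ * ‖u - u'‖) := le_min zero_le_one (by positivity)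
          calc |⟪ξ, v⟫| * |⟪ξ, w⟫| * |Real.exp (-⟪ξ, u⟫) - Real.exp (-⟪ξ, u'⟫)|
              ≤ ((‖ξ‖ * ‖v‖) * (‖ξ‖ * ‖w‖)) * min 1 (‖ξ‖ * ‖u - u'‖) :=
                mul_le_mul h2 he3 (abs_nonneg _) (by positivity)
            _ = ‖v‖ * ‖w‖ * min 1 (‖ξ‖ * ‖u - u'‖) * ‖ξ‖ ^ 2 := by ring
        have hb1 : |∫ ξ in (K \ {0}) ∩ {ξ | ‖ξ‖ ≤ R},
              ((⟪ξ, v⟫ * ⟪ξ, w⟫ * Real.exp (-⟪ξ, u⟫)) / ‖ξ‖ ^ 2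
                - (⟪ξ, v⟫ * ⟪ξ, w⟫ * Real.exp (-⟪ξ, u'⟫)) / ‖ξ‖ ^ 2) ∂p.ν x|
            ≤ (‖v‖ * ‖w‖ * (R * ‖u - u'‖)) * (p.ν x (K \ {0})).toReal := by
          have hble : |∫ ξ in (K \ {0}) ∩ {ξ | ‖ξ‖ ≤ R},
                ((⟪ξ, v⟫ * ⟪ξ, w⟫ * Real.exp (-⟪ξ, u⟫)) / ‖ξ‖ ^ 2
                  - (⟪ξ, v⟫ * ⟪ξ, w⟫ * Real.exp (-⟪ξ, u'⟫)) / ‖ξ‖ ^ 2) ∂p.ν x|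
              ≤ (‖v‖ * ‖w‖ * (R * ‖u - u'‖)) * (p.ν x ((K \ {0}) ∩ {ξ | ‖ξ‖ ≤ R})).toReal := by
            rw [← Real.norm_eq_abs]
            refine norm_setIntegral_le_of_norm_le_const
              (lt_of_le_of_lt (measure_mono Set.inter_subset_left) (hνfin x hx))
              fun ξ hξ => ?_
            rw [Real.norm_eq_abs]
            refine le_trans (hpoint ξ hξ.1) ?_
            have h3 : min 1 (‖ξ‖ * ‖u - u'‖) ≤ R * ‖u - u'‖ := by
              refine le_trans (min_le_right _ _) ?_
              exact mul_le_mul_of_nonneg_right hξ.2 (norm_nonneg _)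
            have := mul_le_mul_of_nonneg_left h3 hc2
            linarith [this]
          refine le_trans hble ?_
          refine mul_le_mul_of_nonneg_left ?_ hc1
          exact ENNReal.toReal_mono (hνfin x hx).ne (measure_mono Set.inter_subset_left)
        have hb2 : |∫ ξ in (K \ {0}) ∩ {ξ | R < ‖ξ‖},
              ((⟪ξ, v⟫ * ⟪ξ, w⟫ * Real.exp (-⟪ξ, u⟫)) / ‖ξ‖ ^ 2
                - (⟪ξ, v⟫ * ⟪ξ, w⟫ * Real.exp (-⟪ξ, u'⟫)) / ‖ξ‖ ^ 2) ∂p.ν x|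
            ≤ (‖v‖ * ‖w‖) * (p.ν x ((K \ {0}) ∩ {ξ | R < ‖ξ‖})).toReal := by
          rw [← Real.norm_eq_abs]
          refine norm_setIntegral_le_of_norm_le_const
            (lt_of_le_of_lt (measure_mono Set.inter_subset_left) (hνfin x hx))
            fun ξ hξ => ?_
          rw [Real.norm_eq_abs]
          refine le_trans (hpoint ξ hξ.1) ?_
          have h3 : min 1 (‖ξ‖ * ‖u - u'‖) ≤ 1 := min_le_left _ _
          have := mul_le_mul_of_nonneg_left h3 hc2
          linarith [this]
        have hinner : ⟪(‖v‖ * ‖w‖ * (R * ‖u - u'‖)) • p.muVec (K \ {0})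
            + (‖v‖ * ‖w‖) • p.muVec ((K \ {0}) ∩ {ξ | R < ‖ξ‖}), x⟫
            = (‖v‖ * ‖w‖ * (R * ‖u - u'‖)) * (p.ν x (K \ {0})).toReal
              + (‖v‖ * ‖w‖) * (p.ν x ((K \ {0}) ∩ {ξ | R < ‖ξ‖})).toReal := by
          rw [inner_add_left, real_inner_smul_left, real_inner_smul_left, hμspec x hx,
            p.muVec_spec _ hmeasS x hx]
        rw [hsub, hsplitI, hinner, abs_neg]
        exact le_trans (abs_add_le _ _) (add_le_add hb1 hb2)
      have h4 := sd_norm_le hK (z := D2R u v w - D2R u' v w) haK key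
      refine le_trans h4 (le_trans (norm_add_le _ _) ?_)
      rw [norm_smul, norm_smul, Real.norm_eq_abs, Real.norm_eq_abs, abs_of_nonneg hc1,
        abs_of_nonneg hc2]
    -- tail estimate
    have htail : Tendsto (fun n : ℕ => ‖p.muVec ((K \ {0}) ∩ {ξ | (n : ℝ) < ‖ξ‖})‖)
        atTop (𝓝 0) := by
      have hmeasSn : ∀ n : ℕ, MeasurableSet ((K \ {0}) ∩ {ξ : H | (n : ℝ) < ‖ξ‖}) := fun n =>
        hmeasN.inter (measurableSet_lt measurable_const measurable_norm)
      have hanti : Antitone fun n : ℕ => (K \ {0}) ∩ {ξ : H | (n : ℝ) < ‖ξ‖} := by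
        intro n m hnm
        refine Set.inter_subset_inter_right _ fun ξ hξ => ?_
        exact lt_of_le_of_lt (Nat.cast_le.2 hnm) (show (m : ℝ) < ‖ξ‖ from hξ)
      have hiInter : ⋂ n : ℕ, ((K \ {0}) ∩ {ξ : H | (n : ℝ) < ‖ξ‖}) = ∅ := by
        ext ξ
        simp only [Set.mem_iInter, Set.mem_empty_iff_false, iff_false, not_forall]
        obtain ⟨n, hn⟩ := exists_nat_gt ‖ξ‖
        exact ⟨n, fun h => absurd h.2 (not_lt.2 hn.le)⟩
      haveI := p.ν_finite _ hμtot
      have hmeas0 : Tendsto (fun n : ℕ =>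
          p.ν (p.muVec (K \ {0})) ((K \ {0}) ∩ {ξ | (n : ℝ) < ‖ξ‖})) atTop (𝓝 0) := by
        have h5 := tendsto_measure_iInter_atTop (μ := p.ν (p.muVec (K \ {0})))
          (fun n => (hmeasSn n).nullMeasurableSet) hanti ⟨0, (measure_lt_top _ _).ne⟩
        rw [hiInter, measure_empty] at h5
        exact h5
      have htoReal : Tendsto (fun n : ℕ =>
          (p.ν (p.muVec (K \ {0})) ((K \ {0}) ∩ {ξ | (n : ℝ) < ‖ξ‖})).toReal) atTop (𝓝 0) := by
        have h6 := (ENNReal.tendsto_toReal (by simp : (0:ℝ≥0∞) ≠ ∞)).comp hmeas0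
        exact h6
      have hsq : ∀ n : ℕ, ‖p.muVec ((K \ {0}) ∩ {ξ | (n : ℝ) < ‖ξ‖})‖
          ≤ Real.sqrt ((p.ν (p.muVec (K \ {0})) ((K \ {0}) ∩ {ξ | (n : ℝ) < ‖ξ‖})).toReal) := by
        intro n
        have hμSn : p.muVec ((K \ {0}) ∩ {ξ | (n : ℝ) < ‖ξ‖}) ∈ K := p.muVec_mem _ (hmeasSn n)
        have hdiffK : p.muVec (K \ {0}) - p.muVec ((K \ {0}) ∩ {ξ | (n : ℝ) < ‖ξ‖}) ∈ K := by
          refine sd_mem hK fun y hy => ?_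
          rw [inner_sub_left, hμspec y hy, p.muVec_spec _ (hmeasSn n) y hy, sub_nonneg]
          exact ENNReal.toReal_mono (hνfin y hy).ne (measure_mono Set.inter_subset_left)
        have h7 : 0 ≤ ⟪p.muVec (K \ {0}) - p.muVec ((K \ {0}) ∩ {ξ | (n : ℝ) < ‖ξ‖}),
            p.muVec ((K \ {0}) ∩ {ξ | (n : ℝ) < ‖ξ‖})⟫ := sd_nonneg hK hdiffK hμSn
        rw [inner_sub_left] at h7
        have h8 : ⟪p.muVec ((K \ {0}) ∩ {ξ | (n : ℝ) < ‖ξ‖}),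
            p.muVec ((K \ {0}) ∩ {ξ | (n : ℝ) < ‖ξ‖})⟫
            ≤ (p.ν (p.muVec (K \ {0})) ((K \ {0}) ∩ {ξ | (n : ℝ) < ‖ξ‖})).toReal := by
          have h9 := p.muVec_spec _ (hmeasSn n) _ hμtot
          rw [← h9]
          rw [real_inner_comm] at h7
          linarith
        refine Real.le_sqrt_of_sq_le ?_
        rw [← real_inner_self_eq_norm_sq]
        exact h8
      have hsqrt0 : Tendsto (fun n : ℕ => Real.sqrt
          ((p.ν (p.muVec (K \ {0})) ((K \ {0}) ∩ {ξ | (n : ℝ) < ‖ξ‖})).toReal)) atTop (𝓝 0) := by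
        have := htoReal.sqrt
        simpa using this
      exact squeeze_zero (fun n => norm_nonneg _) hsq hsqrt0
    -- epsilon-delta
    rw [Metric.continuousWithinAt_iff]
    intro ε hε
    have hev : ∀ᶠ n : ℕ in atTop,
        ‖v‖ * ‖w‖ * ‖p.muVec ((K \ {0}) ∩ {ξ | (n : ℝ) < ‖ξ‖})‖ < ε / 2 := by
      have h10 := htail.const_mul (‖v‖ * ‖w‖)
      rw [mul_zero] at h10
      exact h10.eventually_lt_const (by linarith)
    obtain ⟨n, hn⟩ := hev.exists
    set D : ℝ := ‖v‖ * ‖w‖ * (n : ℝ) * ‖p.muVec (K \ {0})‖ with hD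
    have hD0 : 0 ≤ D := by positivity
    refine ⟨ε / (2 * (D + 1)), by positivity, ?_⟩
    intro u hu hdist
    rw [dist_eq_norm] at hdist ⊢
    have h11 := he_bound (n : ℝ) (Nat.cast_nonneg n) u hu u₀ hu₀
    have h12 : ‖v‖ * ‖w‖ * ((n : ℝ) * ‖u - u₀‖) * ‖p.muVec (K \ {0})‖ = D * ‖u - u₀‖ := by
      rw [hD]; ring
    have h13 : D * ‖u - u₀‖ ≤ D * (ε / (2 * (D + 1))) :=
      mul_le_mul_of_nonneg_left hdist.le hD0
    have h14 : D * (ε / (2 * (D + 1))) < ε / 2 := by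
      have hcancel : ε / (2 * (D + 1)) * (2 * (D + 1)) = ε := div_mul_cancel₀ ε (by positivity)
      have hδ : 0 < ε / (2 * (D + 1)) := by positivity
      nlinarith [hcancel, hδ, hD0]
    calc ‖D2R u v w - D2R u₀ v w‖
        ≤ ‖v‖ * ‖w‖ * ((n : ℝ) * ‖u - u₀‖) * ‖p.muVec (K \ {0})‖
          + ‖v‖ * ‖w‖ * ‖p.muVec ((K \ {0}) ∩ {ξ | (n : ℝ) < ‖ξ‖})‖ := h11
      _ < ε := by rw [h12] at *; linarith
end
end
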